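/- Let $\{X_k, \mathcal{F}_k\}_{k=0}^n$ be a real-valued martingale with $|X_k - X_{k-1}| \le d$ almost surely for every $k \in \{1,\dots,n\}$, for some $d > 0$. Then for every $\alpha \ge 0$ with $\delta = \alpha/d \le 1$, $\Pr(|X_n - X_0| \ge \alpha n) \le 2\exp(-n f(\delta))$ where $f(\delta) = \ln 2 \cdot (1 - h_2((1-\delta)/2))$ and $h_2$ is the binary entropy function to base 2. -/

import Mathlib

open MeasureTheory

/-- Binary entropy function to base 2. -/
noncomputable def binEnt2 (x : ℝ) : ℝ := -(x * Real.logb 2 x) - (1 - x) * Real.logb 2 (1 - x)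


lemma chord {t d y : ℝ} (hd : 0 < d) (hy : |y| ≤ d) :
    Real.exp (t * y) ≤ Real.cosh (t * d) + (Real.sinh (t * d) / d) * y := by
  obtain ⟨h1, h2⟩ := abs_le.mp hy
  have ha : (0:ℝ) ≤ (d + y) / (2 * d) := div_nonneg (by linarith) (by linarith)
  have hb : (0:ℝ) ≤ (d - y) / (2 * d) := div_nonneg (by linarith) (by linarith)
  have hab : (d + y) / (2 * d) + (d - y) / (2 * d) = 1 := by field_simp; ring
  have key := convexOn_exp.2 (Set.mem_univ (t * d)) (Set.mem_univ (-(t * d))) ha hb hab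
  simp only [smul_eq_mul] at key
  have harg : (d + y) / (2 * d) * (t * d) + (d - y) / (2 * d) * (-(t * d)) = t * y := by
    field_simp; ring
  rw [harg] at key
  refine key.trans (le_of_eq ?_)
  rw [Real.cosh_eq, Real.sinh_eq]
  field_simp
  ring

lemma fid (p : ℝ) :
    Real.log 2 * (1 - binEnt2 p) = Real.log 2 + p * Real.log p + (1 - p) * Real.log (1 - p) := by
  have h2 : Real.log 2 ≠ 0 := ne_of_gt (Real.log_pos (by norm_num))
  unfold binEnt2
  rw [Real.logb, Real.logb]
  field_simp
  ring
lemma mgfH {Ω : Type*} {m0 : MeasurableSpace Ω} {μ : Measure Ω} [IsProbabilityMeasure μ]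
    (ℱ : Filtration ℕ m0) (X : ℕ → Ω → ℝ) (hmart : Martingale X ℱ μ)
    (n : ℕ) (d : ℝ) (hd : 0 < d)
    (hjump : ∀ k, 1 ≤ k → k ≤ n → ∀ᵐ ω ∂μ, |X k ω - X (k - 1) ω| ≤ d) (t : ℝ) :
    ∀ m, m ≤ n →
    (∀ᵐ ω ∂μ, |X m ω - X 0 ω| ≤ m * d) ∧
    Integrable (fun ω => Real.exp (t * (X m ω - X 0 ω))) μ ∧
    ∫ ω, Real.exp (t * (X m ω - X 0 ω)) ∂μ ≤ Real.cosh (t * d) ^ m := by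
  have int_of_bound : ∀ {f : Ω → ℝ}, StronglyMeasurable f → ∀ (C : ℝ),
      (∀ᵐ ω ∂μ, ‖f ω‖ ≤ C) → Integrable f μ := by
    intro f hf C h
    exact (integrable_const C).mono' hf.aestronglyMeasurable h
  have hXsm : ∀ m : ℕ, StronglyMeasurable (X m) :=
    fun m => (hmart.stronglyAdapted m).mono (ℱ.le m)
  intro m
  induction m with
  | zero =>
      intro _
      refine ⟨by simp, ?_, ?_⟩
      · simp_rw [sub_self, mul_zero, Real.exp_zero]
        exact integrable_const 1
      · simp
  | succ m ih =>
      intro hm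
      obtain ⟨hbd, hint, hI⟩ := ih (le_trans (Nat.le_succ m) hm)
      set Z : Ω → ℝ := fun ω => Real.exp (t * (X m ω - X 0 ω)) with hZ
      set Y : Ω → ℝ := fun ω => X (m + 1) ω - X m ω with hY
      have hjm : ∀ᵐ ω ∂μ, |Y ω| ≤ d := by
        have := hjump (m + 1) (Nat.le_add_left 1 m) hm
        simpa using this
      -- new a.e. bound
      have hbd' : ∀ᵐ ω ∂μ, |X (m + 1) ω - X 0 ω| ≤ (m + 1 : ℕ) * d := by
        filter_upwards [hbd, hjm] with ω h1 h2
        calc |X (m + 1) ω - X 0 ω| ≤ |X (m + 1) ω - X m ω| + |X m ω - X 0 ω| :=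
              abs_sub_le _ _ _
          _ ≤ d + m * d := add_le_add h2 h1
          _ = (m + 1 : ℕ) * d := by push_cast; ring
      -- measurability
      have hZm : StronglyMeasurable[ℱ m] Z := by
        have h1 : StronglyMeasurable[ℱ m] (fun ω => t * (X m ω - X 0 ω)) :=
          ((hmart.stronglyAdapted m).sub ((hmart.stronglyAdapted 0).mono (ℱ.mono (Nat.zero_le m)))).const_mul t
        exact Real.continuous_exp.comp_stronglyMeasurable h1
      have hZsm : StronglyMeasurable Z := hZm.mono (ℱ.le m)
      have hYsm : StronglyMeasurable Y := (hXsm (m + 1)).sub (hXsm m)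
      -- bounds
      set C := Real.exp (|t| * (m * d)) with hC
      have hZbd : ∀ᵐ ω ∂μ, ‖Z ω‖ ≤ C := by
        filter_upwards [hbd] with ω h1
        rw [Real.norm_eq_abs, abs_of_pos (Real.exp_pos _)]
        apply Real.exp_le_exp.mpr
        calc t * (X m ω - X 0 ω) ≤ |t * (X m ω - X 0 ω)| := le_abs_self _
          _ = |t| * |X m ω - X 0 ω| := abs_mul _ _
          _ ≤ |t| * (m * d) := by
              exact mul_le_mul_of_nonneg_left h1 (abs_nonneg t)
      have hY_int : Integrable Y μ := by
        refine int_of_bound hYsm d ?_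
        filter_upwards [hjm] with ω h; rwa [Real.norm_eq_abs]
      have hZ_int : Integrable Z μ := by
        refine int_of_bound hZsm C ?_
        exact hZbd
      have hZY_int : Integrable (Z * Y) μ := by
        refine int_of_bound (hZsm.mul hYsm) (C * d) ?_
        filter_upwards [hZbd, hjm] with ω h1 h2
        rw [Pi.mul_apply, norm_mul]
        exact mul_le_mul h1 (by rwa [Real.norm_eq_abs]) (norm_nonneg _)
          (le_trans (norm_nonneg _) h1)
      -- martingale orthogonality
      have hEZY : ∫ ω, (Z * Y) ω ∂μ = 0 := by
        have h2 : μ[Y|ℱ m] =ᵐ[μ] 0 := by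
          have hsub : μ[Y|ℱ m] =ᵐ[μ] μ[X (m + 1)|ℱ m] - μ[X m|ℱ m] :=
            condExp_sub (hmart.integrable (m + 1)) (hmart.integrable m) _
          refine hsub.trans ?_
          have e1 := hmart.condExp_ae_eq (Nat.le_succ m)
          have e2 := hmart.condExp_ae_eq (le_refl m)
          filter_upwards [e1, e2] with ω h1 h2
          simp [h1, h2]
        have h1 : μ[Z * Y|ℱ m] =ᵐ[μ] Z * μ[Y|ℱ m] :=
          condExp_mul_of_stronglyMeasurable_left hZm hZY_int hY_int
        have h3 : μ[Z * Y|ℱ m] =ᵐ[μ] 0 := by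
          refine h1.trans ?_
          filter_upwards [h2] with ω h
          simp [h]
        rw [← integral_condExp (ℱ.le m)]
        rw [integral_congr_ae h3]
        simp
      -- pointwise bound
      set c2 := Real.sinh (t * d) / d with hc2
      have key : ∀ᵐ ω ∂μ, Real.exp (t * (X (m + 1) ω - X 0 ω)) ≤
          Real.cosh (t * d) * Z ω + c2 * (Z * Y) ω := by
        filter_upwards [hjm] with ω hω
        have harg : t * (X (m + 1) ω - X 0 ω) = t * (X m ω - X 0 ω) + t * Y ω := by
          show t * (X (m + 1) ω - X 0 ω) = t * (X m ω - X 0 ω) + t * (X (m + 1) ω - X m ω)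
          ring
        rw [harg, Real.exp_add]
        have hch := chord (t := t) hd hω
        calc Z ω * Real.exp (t * Y ω)
            ≤ Z ω * (Real.cosh (t * d) + c2 * Y ω) :=
              mul_le_mul_of_nonneg_left hch (Real.exp_pos _).le
          _ = Real.cosh (t * d) * Z ω + c2 * (Z * Y) ω := by simp [Pi.mul_apply]; ring
      have hint1 : Integrable (fun ω => Real.exp (t * (X (m + 1) ω - X 0 ω))) μ := by
        refine int_of_bound ?_ (Real.exp (|t| * ((m + 1 : ℕ) * d))) ?_
        · exact Real.continuous_exp.comp_stronglyMeasurable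
            (((hXsm (m + 1)).sub (hXsm 0)).const_mul t)
        · filter_upwards [hbd'] with ω h1
          rw [Real.norm_eq_abs, abs_of_pos (Real.exp_pos _)]
          apply Real.exp_le_exp.mpr
          calc t * (X (m + 1) ω - X 0 ω) ≤ |t * (X (m + 1) ω - X 0 ω)| := le_abs_self _
            _ = |t| * |X (m + 1) ω - X 0 ω| := abs_mul _ _
            _ ≤ |t| * ((m + 1 : ℕ) * d) := mul_le_mul_of_nonneg_left h1 (abs_nonneg t)
      refine ⟨hbd', hint1, ?_⟩
      have hintR : Integrable (fun ω => Real.cosh (t * d) * Z ω + c2 * (Z * Y) ω) μ :=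
        (hZ_int.const_mul _).add (hZY_int.const_mul _)
      calc ∫ ω, Real.exp (t * (X (m + 1) ω - X 0 ω)) ∂μ
          ≤ ∫ ω, (Real.cosh (t * d) * Z ω + c2 * (Z * Y) ω) ∂μ :=
            integral_mono_ae hint1 hintR key
        _ = Real.cosh (t * d) * ∫ ω, Z ω ∂μ + c2 * ∫ ω, (Z * Y) ω ∂μ := by
            rw [integral_add (hZ_int.const_mul _) (hZY_int.const_mul _),
              integral_const_mul, integral_const_mul]
        _ = Real.cosh (t * d) * ∫ ω, Z ω ∂μ := by rw [hEZY]; ring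
        _ ≤ Real.cosh (t * d) * Real.cosh (t * d) ^ m :=
            mul_le_mul_of_nonneg_left hI (le_of_lt (Real.cosh_pos _))
        _ = Real.cosh (t * d) ^ (m + 1) := by rw [pow_succ]; ring
lemma tailBound {Ω : Type*} {m0 : MeasurableSpace Ω} {μ : Measure Ω} [IsProbabilityMeasure μ]
    (ℱ : Filtration ℕ m0) (X : ℕ → Ω → ℝ) (hmart : Martingale X ℱ μ)
    (n : ℕ) (d : ℝ) (hd : 0 < d)
    (hjump : ∀ k, 1 ≤ k → k ≤ n → ∀ᵐ ω ∂μ, |X k ω - X (k - 1) ω| ≤ d)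
    (α : ℝ) (t : ℝ) (ht : 0 ≤ t) :
    (μ {ω | (n : ℝ) * α ≤ |X n ω - X 0 ω|}).toReal ≤
      2 * (Real.exp (-(t * α)) * Real.cosh (t * d)) ^ n := by
  have hjneg : ∀ k, 1 ≤ k → k ≤ n → ∀ᵐ ω ∂μ, |(-X) k ω - (-X) (k - 1) ω| ≤ d := by
    intro k h1 h2
    filter_upwards [hjump k h1 h2] with ω h
    show |-(X k ω) - -(X (k - 1) ω)| ≤ d
    rw [neg_sub_neg, abs_sub_comm]
    exact h
  obtain ⟨_, hint1, hI1⟩ := mgfH ℱ X hmart n d hd hjump t n le_rfl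
  obtain ⟨_, hint2, hI2⟩ := mgfH ℱ (-X) hmart.neg n d hd hjneg t n le_rfl
  have hup : (μ {ω | (n : ℝ) * α ≤ X n ω - X 0 ω}).toReal ≤
      Real.exp (-t * ((n : ℝ) * α)) * Real.cosh (t * d) ^ n := by
    refine (ProbabilityTheory.measure_ge_le_exp_mul_mgf (X := fun ω => X n ω - X 0 ω)
      ((n : ℝ) * α) ht hint1).trans ?_
    rw [ProbabilityTheory.mgf]
    exact mul_le_mul_of_nonneg_left hI1 (Real.exp_pos _).le
  have hdown : (μ {ω | (n : ℝ) * α ≤ -(X n ω - X 0 ω)}).toReal ≤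
      Real.exp (-t * ((n : ℝ) * α)) * Real.cosh (t * d) ^ n := by
    refine (ProbabilityTheory.measure_ge_le_exp_mul_mgf (X := fun ω => -(X n ω - X 0 ω))
      ((n : ℝ) * α) ht ?_).trans ?_
    · refine hint2.congr ?_
      filter_upwards with ω
      show Real.exp (t * (-(X n ω) - -(X 0 ω))) = _
      ring_nf
    · rw [ProbabilityTheory.mgf]
      refine mul_le_mul_of_nonneg_left (le_trans (le_of_eq ?_) hI2) (Real.exp_pos _).le
      refine integral_congr_ae ?_
      filter_upwards with ω
      show Real.exp (t * -(X n ω - X 0 ω)) = Real.exp (t * (-(X n ω) - -(X 0 ω)))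
      ring_nf
  have hsub : {ω | (n : ℝ) * α ≤ |X n ω - X 0 ω|} ⊆
      {ω | (n : ℝ) * α ≤ X n ω - X 0 ω} ∪ {ω | (n : ℝ) * α ≤ -(X n ω - X 0 ω)} := by
    intro ω h
    rcases le_abs.mp (Set.mem_setOf_eq ▸ h) with h' | h'
    · exact Or.inl h'
    · exact Or.inr h'
  have hmeas : (μ {ω | (n : ℝ) * α ≤ |X n ω - X 0 ω|}).toReal ≤
      (μ {ω | (n : ℝ) * α ≤ X n ω - X 0 ω}).toReal +
      (μ {ω | (n : ℝ) * α ≤ -(X n ω - X 0 ω)}).toReal := by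
    rw [← ENNReal.toReal_add (measure_ne_top _ _) (measure_ne_top _ _)]
    exact ENNReal.toReal_mono (by finiteness)
      ((measure_mono hsub).trans (measure_union_le _ _))
  have hrw : Real.exp (-t * ((n : ℝ) * α)) * Real.cosh (t * d) ^ n =
      (Real.exp (-(t * α)) * Real.cosh (t * d)) ^ n := by
    rw [mul_pow, ← Real.exp_nat_mul]
    congr 1
    ring
  calc (μ {ω | (n : ℝ) * α ≤ |X n ω - X 0 ω|}).toReal
      ≤ _ + _ := hmeas
    _ ≤ Real.exp (-t * ((n : ℝ) * α)) * Real.cosh (t * d) ^ n +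
        Real.exp (-t * ((n : ℝ) * α)) * Real.cosh (t * d) ^ n := add_le_add hup hdown
    _ = 2 * (Real.exp (-(t * α)) * Real.cosh (t * d)) ^ n := by rw [hrw]; ring

/-- tightened Azuma inequality for martingales with uniformly bounded
jumps, with exponent `f(δ) = ln 2 · (1 - h₂((1-δ)/2))`. -/
theorem stmt_2 {Ω : Type*} {m0 : MeasurableSpace Ω} {μ : Measure Ω} [IsProbabilityMeasure μ]
    (ℱ : Filtration ℕ m0) (X : ℕ → Ω → ℝ) (hmart : Martingale X ℱ μ)
    (n : ℕ) (d : ℝ) (hd : 0 < d)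
    (hjump : ∀ k, 1 ≤ k → k ≤ n → ∀ᵐ ω ∂μ, |X k ω - X (k - 1) ω| ≤ d)
    (α : ℝ) (hα : 0 ≤ α) (hδ : α / d ≤ 1) :
    (μ {ω | (n : ℝ) * α ≤ |X n ω - X 0 ω|}).toReal ≤
      2 * Real.exp (-(n : ℝ) * (Real.log 2 * (1 - binEnt2 ((1 - α / d) / 2)))) := by
  have hδ0 : 0 ≤ α / d := div_nonneg hα hd.le
  set p : ℝ := (1 - α / d) / 2 with hp
  by_cases hcase : α / d = 1
  · -- boundary case: p = 0, take the limit t → ∞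
    have hα_eq : α = d := by
      field_simp at hcase
      linarith [hcase]
    have hp0 : p = 0 := by rw [hp, hcase]; norm_num
    have hbe : binEnt2 p = 0 := by rw [hp0]; simp [binEnt2]
    have hb : ∀ᶠ t : ℝ in Filter.atTop,
        (μ {ω | (n : ℝ) * α ≤ |X n ω - X 0 ω|}).toReal ≤
          2 * (Real.exp (-(t * α)) * Real.cosh (t * d)) ^ n := by
      filter_upwards [Filter.eventually_ge_atTop (0 : ℝ)] with t ht
      exact tailBound ℱ X hmart n d hd hjump α t ht
    have h1 : ∀ t : ℝ, Real.exp (-(t * α)) * Real.cosh (t * d) =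
        (1 + Real.exp (-(2 * (t * d)))) / 2 := by
      intro t
      rw [hα_eq, Real.cosh_eq,
        show Real.exp (-(t * d)) * ((Real.exp (t * d) + Real.exp (-(t * d))) / 2) =
          (Real.exp (-(t * d)) * Real.exp (t * d) +
            Real.exp (-(t * d)) * Real.exp (-(t * d))) / 2 from by ring,
        ← Real.exp_add, ← Real.exp_add,
        show -(t * d) + t * d = 0 from by ring,
        show -(t * d) + -(t * d) = -(2 * (t * d)) from by ring, Real.exp_zero]
    have hlin : Filter.Tendsto (fun t : ℝ => -(2 * (t * d))) Filter.atTop Filter.atBot := by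
      have h2 : Filter.Tendsto (fun t : ℝ => 2 * (t * d)) Filter.atTop Filter.atTop := by
        have h3 := Filter.Tendsto.const_mul_atTop (show (0:ℝ) < 2 * d by positivity)
          (Filter.tendsto_id (α := ℝ))
        refine h3.congr ?_
        intro t
        simp only [id_eq]
        ring
      exact Filter.tendsto_neg_atTop_atBot.comp h2
    have hexp : Filter.Tendsto (fun t : ℝ => Real.exp (-(2 * (t * d)))) Filter.atTop
        (nhds 0) := Real.tendsto_exp_atBot.comp hlin
    have hlim : Filter.Tendsto (fun t : ℝ => 2 * (Real.exp (-(t * α)) * Real.cosh (t * d)) ^ n)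
        Filter.atTop (nhds (2 * ((1 + 0) / 2) ^ n)) := by
      have := (((hexp.const_add 1).div_const 2).pow n).const_mul 2
      refine this.congr ?_
      intro t
      rw [h1]
    have hval : 2 * ((1 + (0:ℝ)) / 2) ^ n =
        2 * Real.exp (-(n : ℝ) * (Real.log 2 * (1 - binEnt2 p))) := by
      rw [hbe, show -(n:ℝ) * (Real.log 2 * (1 - 0)) = (n : ℕ) * (-Real.log 2) from by ring,
        Real.exp_nat_mul, Real.exp_neg, Real.exp_log (by norm_num : (0:ℝ) < 2)]
      norm_num
    rw [hval] at hlim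
    exact ge_of_tendsto hlim hb
  · -- interior case: p > 0, pick the optimal t
    have hδ1 : α / d < 1 := lt_of_le_of_ne hδ hcase
    have hp_pos : 0 < p := by rw [hp]; linarith
    have hq_pos : 0 < 1 - p := by rw [hp]; linarith
    have hple : p ≤ 1 - p := by rw [hp]; linarith
    set Lp : ℝ := Real.log p with hLp
    set Lq : ℝ := Real.log (1 - p) with hLq
    set t : ℝ := (Lq - Lp) / (2 * d) with htdef
    have ht0 : 0 ≤ t := by
      apply div_nonneg _ (by positivity)
      rw [sub_nonneg, hLq, hLp]
      exact Real.log_le_log hp_pos hple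
    have htd : t * d = (Lq - Lp) / 2 := by rw [htdef]; field_simp
    have hαd : α = (1 - 2 * p) * d := by
      rw [hp]
      field_simp
      ring
    have htα : t * α = (1 - 2 * p) * (Lq - Lp) / 2 := by
      rw [htdef, hαd]
      field_simp
    have key : Real.exp (-(t * α)) * Real.cosh (t * d) =
        Real.exp (-(Real.log 2 * (1 - binEnt2 p))) := by
      rw [Real.cosh_eq,
        show Real.exp (-(t * α)) * ((Real.exp (t * d) + Real.exp (-(t * d))) / 2) =
          (Real.exp (-(t * α)) * Real.exp (t * d) +
            Real.exp (-(t * α)) * Real.exp (-(t * d))) / 2 from by ring,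
        ← Real.exp_add, ← Real.exp_add,
        show -(t * α) + t * d = Lq + (-(p * Lp) - (1 - p) * Lq) from by rw [htα, htd]; ring,
        show -(t * α) + -(t * d) = Lp + (-(p * Lp) - (1 - p) * Lq) from by rw [htα, htd]; ring,
        Real.exp_add, Real.exp_add, hLp, hLq, Real.exp_log hq_pos, Real.exp_log hp_pos,
        fid p, ← hLp, ← hLq,
        show -(Real.log 2 + p * Lp + (1 - p) * Lq) =
          (-(p * Lp) - (1 - p) * Lq) + (-(Real.log 2)) from by ring,
        Real.exp_add, Real.exp_neg, Real.exp_log (by norm_num : (0:ℝ) < 2)]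
      ring
    refine (tailBound ℱ X hmart n d hd hjump α t ht0).trans (le_of_eq ?_)
    rw [key, ← Real.exp_nat_mul]
    congr 1
    ring
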